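/- arXiv:1911.07307 — 3 statements merged into one kernel-verified Lean document; each statement's English description precedes it below -/
import Mathlib

section
/- Let β < 1 and let f : [0,∞) → ℝ be a bounded continuous function. Then lim_{r→0⁺} ∫_{{w ∈ ℂ : 0 < |w| < 1}} f(log|w| / log r) · |w|^{−2β} dλ(w) = (π/(1−β)) · f(0), where λ denotes the Lebesgue measure on ℂ identified with ℝ². -/
open MeasureTheory

section aux

variable (β : ℝ)

private noncomputable def cc (β : ℝ) : ℝ := 2 - 2 * β

private lemma cc_pos (hβ : β < 1) : 0 < cc β := by unfold cc; linarith

/-- The rescaled integral after change of variables. -/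
private noncomputable def Jint (β : ℝ) (f : ℝ → ℝ) (r : ℝ) : ℝ :=
  ∫ u in Set.Ioi (0:ℝ), Real.exp (-u) * f (-(u / cc β) / Real.log r)

private lemma key_eq (hβ : β < 1) (f : ℝ → ℝ) (r : ℝ) (hr : r ∈ Set.Ioo (0:ℝ) 1) :
    (∫ w in {w : ℂ | 0 < ‖w‖ ∧ ‖w‖ < 1},
        f (Real.log (‖w‖) / Real.log r) * ‖w‖ ^ (-2 * β) ∂volume)
      = Real.pi / (1 - β) * Jint β f r := by
  have hc : 0 < cc β := cc_pos β hβ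
  set Fr : ℝ → ℝ := fun y => f (Real.log y / Real.log r) * y ^ (-2 * β) with hFr
  set G : ℝ → ℝ := Set.indicator (Set.Ioo 0 1) Fr with hG
  have h1 : {w : ℂ | 0 < ‖w‖ ∧ ‖w‖ < 1}
      = (fun w : ℂ => ‖w‖) ⁻¹' (Set.Ioo 0 1) := rfl
  rw [h1, ← integral_indicator (measurableSet_Ioo.preimage continuous_norm.measurable)]
  have h2 : (fun w : ℂ => Set.indicator ((fun w : ℂ => ‖w‖) ⁻¹' Set.Ioo 0 1)
      (fun w : ℂ => f (Real.log (‖w‖) / Real.log r) * ‖w‖ ^ (-2 * β)) w)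
      = fun w : ℂ => G ‖w‖ := by
    funext w
    exact Set.indicator_comp_right (s := Set.Ioo 0 1) (f := fun w : ℂ => ‖w‖) (g := Fr)
  rw [h2, integral_fun_norm_addHaar volume G]
  -- simplify dimension and ball volume
  have hdim : Module.finrank ℝ ℂ = 2 := Complex.finrank_real_complex
  rw [hdim]
  have hball : volume.real (Metric.ball (0:ℂ) 1) = Real.pi := by
    rw [Measure.real, Complex.volume_ball]
    simp
  rw [hball]
  -- y ^ (2-1) • G y = y * G y
  have h3 : (∫ y in Set.Ioi (0:ℝ), y ^ (2 - 1) • G y)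
      = ∫ y in Set.Ioo (0:ℝ) 1, y * Fr y := by
    have hind : (fun y : ℝ => y ^ (2-1) • G y)
        = Set.indicator (Set.Ioo 0 1) (fun y => y * Fr y) := by
      funext y
      by_cases h : y ∈ Set.Ioo (0:ℝ) 1
      · rw [hG, Set.indicator_of_mem h, Set.indicator_of_mem h]; simp
      · rw [hG, Set.indicator_of_notMem h, Set.indicator_of_notMem h]; simp
    rw [hind, integral_indicator measurableSet_Ioo, Measure.restrict_restrict measurableSet_Ioo,
      Set.inter_eq_self_of_subset_left Set.Ioo_subset_Ioi_self]
  rw [h3]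
  -- change of variables y = exp (-(u/c))
  have himg : (fun u : ℝ => Real.exp (-(u / cc β))) '' Set.Ioi 0 = Set.Ioo 0 1 := by
    ext y
    constructor
    · rintro ⟨u, hu, rfl⟩
      refine ⟨Real.exp_pos _, Real.exp_lt_one_iff.2 ?_⟩
      have : 0 < u / cc β := div_pos hu hc
      linarith
    · intro hy
      refine ⟨-(cc β * Real.log y), ?_, ?_⟩
      · have hlog : Real.log y < 0 := Real.log_neg hy.1 hy.2
        have : cc β * Real.log y < 0 := mul_neg_of_pos_of_neg hc hlog
        simpa using this
      · show Real.exp (-(-(cc β * Real.log y) / cc β)) = y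
        have h5 : -(-(cc β * Real.log y) / cc β) = Real.log y := by
          field_simp
        rw [h5, Real.exp_log hy.1]
  have hderiv : ∀ u ∈ Set.Ioi (0:ℝ), HasDerivWithinAt (fun u : ℝ => Real.exp (-(u / cc β)))
      (Real.exp (-(u / cc β)) * -(1 / cc β)) (Set.Ioi 0) u := by
    intro u _
    exact (((hasDerivAt_id u).div_const (cc β)).neg.exp).hasDerivWithinAt
  have hinj : Set.InjOn (fun u : ℝ => Real.exp (-(u / cc β))) (Set.Ioi 0) := by
    intro a _ b _ hab
    have h := Real.exp_injective hab
    have h2 : a / cc β = b / cc β := by linarith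
    rw [div_eq_div_iff hc.ne' hc.ne'] at h2
    exact mul_right_cancel₀ hc.ne' h2
  rw [← himg, integral_image_eq_integral_abs_deriv_smul measurableSet_Ioi hderiv hinj
    (fun y => y * Fr y)]
  have h4 : (∫ u in Set.Ioi (0:ℝ), |Real.exp (-(u / cc β)) * -(1 / cc β)| •
        ((fun y => y * Fr y) (Real.exp (-(u / cc β)))))
      = ∫ u in Set.Ioi (0:ℝ), (1 / cc β) * (Real.exp (-u) * f (-(u / cc β) / Real.log r)) := by
    refine integral_congr_ae (Filter.Eventually.of_forall fun u => ?_)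
    have habs : |Real.exp (-(u / cc β)) * -(1 / cc β)|
        = Real.exp (-(u / cc β)) * (1 / cc β) := by
      rw [abs_mul, abs_neg, abs_of_pos (Real.exp_pos _), abs_of_pos (by positivity)]
    simp only [smul_eq_mul]
    rw [habs, hFr]
    simp only
    rw [Real.rpow_def_of_pos (Real.exp_pos _), Real.log_exp]
    have e1 : Real.exp (-(u / cc β)) * Real.exp (-(u / cc β))
        * Real.exp (-(u / cc β) * (-2 * β)) = Real.exp (-u) := by
      rw [← Real.exp_add, ← Real.exp_add]
      congr 1
      have h2β : (2:ℝ) - 2 * β ≠ 0 := by linarith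
      have hcc : cc β = 2 - 2 * β := rfl
      rw [hcc]
      field_simp [h2β]
      have h1β : (1:ℝ) - β ≠ 0 := by linarith
      field_simp
      ring
    linear_combination (f (-(u / cc β) / Real.log r) * (1 / cc β)) * e1
  rw [h4, integral_const_mul]
  have : Real.pi / (1 - β) = 2 * (Real.pi * (1 / cc β)) := by
    have h1β : (1:ℝ) - β ≠ 0 := by linarith
    have h2 : cc β = 2 * (1 - β) := by unfold cc; ring
    rw [h2]
    field_simp
  rw [this, Jint]
  simp only [nsmul_eq_mul, smul_eq_mul, Nat.cast_ofNat]
  ring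

end aux

/-- For `β < 1` and `f` bounded continuous (on `[0,∞)`):
`lim_{r→0⁺} ∫_{0<|w|<1} f(log|w|/log r)·|w|^{−2β} dλ(w) = (π/(1−β))·f(0)`. -/
theorem stmt6 (β : ℝ) (hβ : β < 1) (f : ℝ → ℝ) (hf : Continuous f)
    (hbd : ∃ C : ℝ, ∀ x, |f x| ≤ C) :
    Filter.Tendsto (fun r : ℝ =>
        ∫ w in {w : ℂ | 0 < ‖w‖ ∧ ‖w‖ < 1},
          f (Real.log (‖w‖) / Real.log r) * ‖w‖ ^ (-2 * β) ∂volume)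
      (nhdsWithin 0 (Set.Ioi 0)) (nhds (Real.pi / (1 - β) * f 0)) := by
  obtain ⟨C, hC⟩ := hbd
  have hc : 0 < cc β := cc_pos β hβ
  -- the limit of Jint
  have hJ : Filter.Tendsto (Jint β f) (nhdsWithin 0 (Set.Ioi 0)) (nhds (f 0)) := by
    have hmain : Filter.Tendsto (Jint β f) (nhdsWithin 0 (Set.Ioi 0))
        (nhds (∫ u in Set.Ioi (0:ℝ), Real.exp (-u) * f 0)) := by
      refine tendsto_integral_filter_of_dominated_convergence
        (fun u => Real.exp (-u) * C) ?_ ?_ ?_ ?_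
      · refine Filter.Eventually.of_forall fun r => ?_
        exact ((Real.continuous_exp.comp continuous_neg).mul
          (hf.comp (((continuous_id.div_const (cc β)).neg).div_const (Real.log r)))).aestronglyMeasurable.restrict
      · refine Filter.Eventually.of_forall fun r => ?_
        refine Filter.Eventually.of_forall fun u => ?_
        rw [Real.norm_eq_abs, abs_mul, Real.abs_exp]
        exact mul_le_mul_of_nonneg_left (hC _) (Real.exp_pos _).le
      · have : IntegrableOn (fun u : ℝ => Real.exp (-1 * u) * C) (Set.Ioi 0) :=
          (exp_neg_integrableOn_Ioi 0 one_pos).mul_const C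
        simpa [IntegrableOn] using this
      · refine Filter.Eventually.of_forall fun u => ?_
        refine Filter.Tendsto.const_mul _ ?_
        refine (hf.tendsto 0).comp ?_
        have harg : (fun r : ℝ => -(u / cc β) / Real.log r)
            = fun r : ℝ => (u / cc β) / (-Real.log r) := by
          funext r; rw [neg_div, ← div_neg]
        rw [harg]
        exact Filter.Tendsto.div_atTop tendsto_const_nhds
          (Filter.tendsto_neg_atBot_atTop.comp Real.tendsto_log_nhdsGT_zero)
    have hval : (∫ u in Set.Ioi (0:ℝ), Real.exp (-u) * f 0) = f 0 := by
      rw [integral_mul_const, integral_exp_neg_Ioi_zero, one_mul]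
    rwa [hval] at hmain
  have hlim := hJ.const_mul (Real.pi / (1 - β))
  refine Filter.Tendsto.congr' ?_ hlim
  filter_upwards [Ioo_mem_nhdsGT_of_mem (by constructor <;> norm_num : (0:ℝ) ∈ Set.Ico 0 1)]
    with r hr
  exact (key_eq β hβ f r hr).symm
end

section
/- Let p ≥ 1, let κ₁, …, κ_p ≥ 0, let S = {i : κᵢ > 0} with m = #S, and let Δ_p = {u ∈ ℝ^p : uᵢ ≥ 0 for all i and Σᵢuᵢ ≤ 1}. Then lim_{s→∞} s^m · ∫_{Δ_p} exp(−s·Σᵢκᵢuᵢ) du = (Πᵢ∈S κᵢ^{−1}) / (p−m)!. -/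
open MeasureTheory Set Filter
open scoped Classical Topology

section Aux

/-- Measurability of weighted simplex-type sets. -/
lemma wsimplex_meas {ι : Type*} [Fintype ι] (c : ι → ℝ) (t : ℝ) :
    MeasurableSet {x : ι → ℝ | (∀ i, 0 ≤ x i) ∧ ∑ i, c i * x i ≤ t} := by
  simp only [setOf_and, setOf_forall]
  refine MeasurableSet.inter (MeasurableSet.iInter fun i =>
    measurableSet_le measurable_const (measurable_pi_apply i)) ?_
  exact measurableSet_le (Finset.measurable_sum _ fun i _ =>
    measurable_const.mul (measurable_pi_apply i)) measurable_const

lemma simplex_meas' {ι : Type*} [Fintype ι] (t : ℝ) :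
    MeasurableSet {x : ι → ℝ | (∀ i, 0 ≤ x i) ∧ ∑ i, x i ≤ t} := by
  simp only [setOf_and, setOf_forall]
  refine MeasurableSet.inter (MeasurableSet.iInter fun i =>
    measurableSet_le measurable_const (measurable_pi_apply i)) ?_
  exact measurableSet_le (Finset.measurable_sum _ fun i _ => measurable_pi_apply i)
    measurable_const

lemma simplex_vol : ∀ (n : ℕ) (t : ℝ), 0 ≤ t →
    volume {x : Fin n → ℝ | (∀ i, 0 ≤ x i) ∧ ∑ i, x i ≤ t}
      = ENNReal.ofReal (t ^ n / n.factorial) := by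
  intro n
  induction n with
  | zero =>
    intro t ht
    have h : {x : Fin 0 → ℝ | (∀ i, 0 ≤ x i) ∧ ∑ i, x i ≤ t} = univ := by
      ext x; simp [ht, Fin.forall_fin_zero_pi]
    rw [h, volume_pi, Measure.pi_univ]; simp
  | succ n ih =>
    intro t ht
    have hmp := measurePreserving_piFinSuccAbove (fun _ : Fin (n + 1) => (volume : Measure ℝ)) 0
    set e := MeasurableEquiv.piFinSuccAbove (fun _ : Fin (n + 1) => ℝ) 0 with he
    set B : Set (ℝ × (Fin n → ℝ)) :=
      {q | 0 ≤ q.1 ∧ (∀ i, 0 ≤ q.2 i) ∧ q.1 + ∑ i, q.2 i ≤ t} with hB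
    have hBmeas : MeasurableSet B := by
      rw [hB]
      simp only [setOf_and, setOf_forall]
      refine MeasurableSet.inter ?_ (MeasurableSet.inter ?_ ?_)
      · exact measurableSet_le measurable_const measurable_fst
      · exact MeasurableSet.iInter fun i => measurableSet_le measurable_const
          (measurable_snd.eval)
      · exact measurableSet_le (measurable_fst.add
          (Finset.measurable_sum _ fun i _ => (measurable_snd.eval)))
          measurable_const
    have hpre : e ⁻¹' B = {x : Fin (n+1) → ℝ | (∀ i, 0 ≤ x i) ∧ ∑ i, x i ≤ t} := by
      ext x
      simp only [mem_preimage, hB, mem_setOf_eq, he, MeasurableEquiv.piFinSuccAbove_apply]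
      rw [Fin.forall_fin_succ, Fin.sum_univ_succ]
      constructor
      · rintro ⟨h0, h1, h2⟩
        exact ⟨⟨h0, fun i => by simpa [Fin.tail] using h1 i⟩, by simpa [Fin.tail] using h2⟩
      · rintro ⟨⟨h0, h1⟩, h2⟩
        exact ⟨h0, fun i => by simpa [Fin.tail] using h1 i, by simpa [Fin.tail] using h2⟩
    have key : volume {x : Fin (n+1) → ℝ | (∀ i, 0 ≤ x i) ∧ ∑ i, x i ≤ t}
        = (volume.prod (volume : Measure (Fin n → ℝ))) B := by
      rw [← hpre]
      exact hmp.measure_preimage hBmeas.nullMeasurableSet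
    rw [key, Measure.prod_apply hBmeas]
    have hslice : ∀ a : ℝ, volume (Prod.mk a ⁻¹' B)
        = (Icc 0 t).indicator (fun a => ENNReal.ofReal ((t - a) ^ n / n.factorial)) a := by
      intro a
      by_cases ha : 0 ≤ a
      · by_cases hat : a ≤ t
        · have : Prod.mk a ⁻¹' B = {y : Fin n → ℝ | (∀ i, 0 ≤ y i) ∧ ∑ i, y i ≤ t - a} := by
            ext y
            simp only [mem_preimage, hB, mem_setOf_eq]
            constructor
            · rintro ⟨_, h1, h2⟩; exact ⟨h1, by linarith⟩
            · rintro ⟨h1, h2⟩; exact ⟨ha, h1, by linarith⟩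
          rw [this, ih _ (by linarith), indicator_of_mem (mem_Icc.2 ⟨ha, hat⟩)]
        · have : Prod.mk a ⁻¹' B = ∅ := by
            ext y
            simp only [mem_preimage, hB, mem_setOf_eq, mem_empty_iff_false, iff_false, not_and]
            intro _ h1
            have : 0 ≤ ∑ i, y i := Finset.sum_nonneg fun i _ => h1 i
            intro h2; linarith
          rw [this, indicator_of_notMem (by simp [mem_Icc, hat])]
          simp
      · have : Prod.mk a ⁻¹' B = ∅ := by
          ext y
          simp only [mem_preimage, hB, mem_setOf_eq, mem_empty_iff_false, iff_false, not_and]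
          intro h0; exact absurd h0 ha
        rw [this, indicator_of_notMem (by simp [mem_Icc, ha])]
        simp
    simp_rw [hslice]
    rw [lintegral_indicator measurableSet_Icc]
    have hInt : IntegrableOn (fun a => (t - a) ^ n / n.factorial) (Icc 0 t) := by
      apply ContinuousOn.integrableOn_compact isCompact_Icc
      fun_prop
    have hnn : 0 ≤ᵐ[volume.restrict (Icc 0 t)] fun a => (t - a) ^ n / n.factorial := by
      filter_upwards [ae_restrict_mem measurableSet_Icc] with a ha
      have : 0 ≤ t - a := by simp [mem_Icc] at ha; linarith [ha.2]
      positivity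
    rw [← ofReal_integral_eq_lintegral_ofReal hInt hnn]
    congr 1
    rw [integral_Icc_eq_integral_Ioc, ← intervalIntegral.integral_of_le ht]
    have : (∫ a in (0:ℝ)..t, (t - a) ^ n / n.factorial)
        = (∫ a in (0:ℝ)..t, (t - a) ^ n) / n.factorial := by
      rw [intervalIntegral.integral_div]
    rw [this, intervalIntegral.integral_comp_sub_left (fun x => x ^ n) t]
    simp only [sub_zero, sub_self]
    rw [integral_pow]
    rw [pow_succ]
    rw [Nat.factorial_succ]
    have h2 : (n.factorial:ℝ) ≠ 0 := Nat.cast_ne_zero.2 n.factorial_ne_zero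
    push_cast
    field_simp
    simp

lemma simplex_vol_fintype (ι : Type*) [Fintype ι] :
    volume {x : ι → ℝ | (∀ i, 0 ≤ x i) ∧ ∑ i, x i ≤ 1}
      = ENNReal.ofReal (1 / (Fintype.card ι).factorial) := by
  classical
  set n := Fintype.card ι with hn
  let f : Fin n ≃ ι := (Fintype.equivFin ι).symm
  have hmp := volume_measurePreserving_piCongrLeft (fun _ : ι => ℝ) f
  set E := MeasurableEquiv.piCongrLeft (fun _ : ι => ℝ) f with hE
  have hpre : ⇑E ⁻¹' {x : ι → ℝ | (∀ i, 0 ≤ x i) ∧ ∑ i, x i ≤ 1}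
      = {y : Fin n → ℝ | (∀ j, 0 ≤ y j) ∧ ∑ j, y j ≤ 1} := by
    ext y
    have hEy : ∀ j, E y (f j) = y j := fun j => by
      rw [hE, MeasurableEquiv.coe_piCongrLeft, Equiv.piCongrLeft_apply_apply]
    simp only [mem_preimage, mem_setOf_eq]
    constructor
    · rintro ⟨h1, h2⟩
      refine ⟨fun j => by rw [← hEy j]; exact h1 (f j), ?_⟩
      calc ∑ j, y j = ∑ j, E y (f j) := by simp_rw [hEy]
        _ = ∑ i, E y i := Equiv.sum_comp f (E y)
        _ ≤ 1 := h2
    · rintro ⟨h1, h2⟩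
      refine ⟨fun i => ?_, ?_⟩
      · have := h1 (f.symm i)
        rwa [← hEy (f.symm i), f.apply_symm_apply] at this
      · calc ∑ i, E y i = ∑ j, E y (f j) := (Equiv.sum_comp f (E y)).symm
          _ = ∑ j, y j := by simp_rw [hEy]
          _ ≤ 1 := h2
  have := hmp.measure_preimage (simplex_meas' (ι := ι) 1).nullMeasurableSet
  rw [hpre] at this
  rw [← this, simplex_vol n 1 zero_le_one, one_pow]

lemma exp_int_Ici {a : ℝ} (ha : 0 < a) :
    ∫ x in Ici (0:ℝ), Real.exp (-(a * x)) = a⁻¹ := by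
  rw [integral_Ici_eq_integral_Ioi]
  have h := integral_comp_mul_left_Ioi (fun x => Real.exp (-x)) 0 ha
  simp only [mul_zero, integral_exp_neg_Ioi_zero, smul_eq_mul, mul_one] at h
  exact h

lemma exp_integrable_Ici {a : ℝ} (ha : 0 < a) :
    IntegrableOn (fun x => Real.exp (-(a * x))) (Ici (0:ℝ)) := by
  rw [integrableOn_Ici_iff_integrableOn_Ioi]
  simpa [neg_mul] using exp_neg_integrableOn_Ioi 0 ha

lemma hyperplane_null {p : ℕ} (T : Finset (Fin p)) (hT : T.Nonempty) :
    volume {v : Fin p → ℝ | ∑ i ∈ T, v i = 1} = 0 := by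
  obtain ⟨i₀, hi₀⟩ := hT
  set f : (Fin p → ℝ) →ₗ[ℝ] ℝ := ∑ i ∈ T, LinearMap.proj i with hfdef
  have hf : ∀ v : Fin p → ℝ, f v = ∑ i ∈ T, v i := fun v => by
    simp [hfdef, LinearMap.sum_apply]
  have hsingle : f (Pi.single i₀ (1:ℝ)) = 1 := by
    rw [hf, Finset.sum_eq_single i₀ (fun b _ hb => Pi.single_eq_of_ne hb 1)
      (fun h => absurd hi₀ h)]
    simp
  have hset : {v : Fin p → ℝ | ∑ i ∈ T, v i = 1} = {v | f v = 1} := by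
    ext v; simp [hf]
  rw [hset]
  have htrans : volume ((fun v : Fin p → ℝ => v + Pi.single i₀ (1:ℝ)) ⁻¹' {v | f v = 1})
      = volume {v : Fin p → ℝ | f v = 1} :=
    measure_preimage_add_right volume _ _
  rw [← htrans]
  have hker : ((fun v : Fin p → ℝ => v + Pi.single i₀ (1:ℝ)) ⁻¹' {v | f v = 1})
      = (LinearMap.ker f : Set (Fin p → ℝ)) := by
    ext v
    simp only [mem_preimage, mem_setOf_eq, SetLike.mem_coe, LinearMap.mem_ker, map_add, hsingle]
    constructor
    · intro h; linarith
    · intro h; rw [h]; ring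
  rw [hker]
  apply Measure.addHaar_submodule
  intro htop
  have : f = 0 := LinearMap.ker_eq_top.1 htop
  rw [this] at hsingle
  simp at hsingle

end Aux

section Limit

variable {p : ℕ} (κ : Fin p → ℝ)

/-- The limiting integrand. -/
noncomputable def Finf (κ : Fin p → ℝ) : (Fin p → ℝ) → ℝ :=
  Set.indicator {v : Fin p → ℝ |
      (∀ i, 0 ≤ v i) ∧ ∑ i ∈ Finset.univ.filter (fun i => ¬ 0 < κ i), v i ≤ 1}
    (fun v => Real.exp (-∑ i, κ i * v i))

lemma limit_integral (hκ : ∀ i, 0 ≤ κ i) :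
    Integrable (Finf κ) ∧
    ∫ v, Finf κ v = (∏ i ∈ Finset.univ.filter fun i => 0 < κ i, (κ i)⁻¹) /
        (Nat.factorial (p - (Finset.univ.filter fun i => 0 < κ i).card) : ℝ) := by
  have hκ0 : ∀ i, ¬ 0 < κ i → κ i = 0 := fun i hi => le_antisymm (not_lt.1 hi) (hκ i)
  set P : Fin p → Prop := fun i => 0 < κ i with hP
  set e := MeasurableEquiv.piEquivPiSubtypeProd (fun _ : Fin p => ℝ) P with he
  have hmp := volume_preserving_piEquivPiSubtypeProd (fun _ : Fin p => ℝ) P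
  set g : {i // P i} → ℝ → ℝ :=
    fun i => Set.indicator (Ici (0:ℝ)) (fun t => Real.exp (-(κ i.1 * t))) with hg
  set f₁ : ({i // P i} → ℝ) → ℝ := fun x => ∏ i, g i (x i) with hf₁
  set f₂ : ({i // ¬ P i} → ℝ) → ℝ :=
    Set.indicator {y | (∀ i, 0 ≤ y i) ∧ ∑ i, y i ≤ 1} (fun _ => 1) with hf₂
  have hgint : ∀ i, Integrable (g i) := by
    intro i
    rw [hg, integrable_indicator_iff measurableSet_Ici]
    exact exp_integrable_Ici i.2
  have hint1 : Integrable f₁ := Integrable.fintype_prod hgint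
  have hval1 : ∫ x, f₁ x = ∏ i : {i // P i}, (κ i.1)⁻¹ := by
    rw [hf₁, integral_fintype_prod_volume_eq_prod]
    refine Finset.prod_congr rfl fun i _ => ?_
    rw [hg, integral_indicator measurableSet_Ici, exp_int_Ici i.2]
  have hT2 := simplex_vol_fintype {i // ¬ P i}
  have hint2 : Integrable f₂ := by
    rw [hf₂, integrable_indicator_iff (simplex_meas' 1)]
    apply (integrableOn_const_iff (by simp)).2
    right
    rw [hT2]
    exact ENNReal.ofReal_lt_top
  have hval2 : ∫ y, f₂ y = 1 / ((Fintype.card {i // ¬ P i}).factorial : ℝ) := by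
    rw [hf₂, integral_indicator (simplex_meas' 1), setIntegral_const, measureReal_def, hT2, smul_eq_mul, mul_one,
      ENNReal.toReal_ofReal (by positivity)]
  have hsum1 : ∀ v : Fin p → ℝ, ∑ i : {i // P i}, κ i.1 * v i.1 = ∑ i, κ i * v i := by
    intro v
    rw [← Finset.sum_subtype (Finset.univ.filter P) (fun x => by simp) (fun i => κ i * v i)]
    refine Finset.sum_filter_of_ne fun i _ hne => ?_
    by_contra hip
    exact hne (by rw [hκ0 i hip, zero_mul])
  have hsum2 : ∀ v : Fin p → ℝ, ∑ i : {i // ¬ P i}, v i.1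
      = ∑ i ∈ Finset.univ.filter (fun i => ¬ 0 < κ i), v i :=
    fun v => (Finset.sum_subtype (Finset.univ.filter (fun i => ¬ 0 < κ i))
      (fun x => by simp [hP, not_lt]) v).symm
  have hcomp : ∀ v, Finf κ v = f₁ (e v).1 * f₂ (e v).2 := by
    intro v
    have hev1 : ∀ i : {i // P i}, (e v).1 i = v i.1 := fun i => rfl
    have hev2 : ∀ i : {i // ¬ P i}, (e v).2 i = v i.1 := fun i => rfl
    by_cases h1 : ∀ i, 0 ≤ v i
    · have hf1v : f₁ (e v).1 = Real.exp (-∑ i, κ i * v i) := by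
        rw [hf₁]
        have hgi : ∀ i : {i // P i}, g i ((e v).1 i) = Real.exp (-(κ i.1 * v i.1)) :=
          fun i => indicator_of_mem (h1 i.1) _
        calc (∏ i : {i // P i}, g i ((e v).1 i))
            = ∏ i : {i // P i}, Real.exp (-(κ i.1 * v i.1)) :=
              Finset.prod_congr rfl fun i _ => hgi i
          _ = Real.exp (∑ i : {i // P i}, -(κ i.1 * v i.1)) := (Real.exp_sum _ _).symm
          _ = Real.exp (-∑ i, κ i * v i) := by
              rw [Finset.sum_neg_distrib, hsum1 v]
      have hsum2' : ∑ i : {i // ¬ P i}, (e v).2 i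
          = ∑ i ∈ Finset.univ.filter (fun i => ¬ 0 < κ i), v i :=
        (Finset.sum_congr rfl fun i _ => hev2 i).trans (hsum2 v)
      by_cases h2 : ∑ i ∈ Finset.univ.filter (fun i => ¬ 0 < κ i), v i ≤ 1
      · have hmem : v ∈ {v : Fin p → ℝ |
            (∀ i, 0 ≤ v i) ∧ ∑ i ∈ Finset.univ.filter (fun i => ¬ 0 < κ i), v i ≤ 1} :=
          ⟨h1, h2⟩
        have hmem2 : (e v).2 ∈ {y : {i // ¬ P i} → ℝ | (∀ i, 0 ≤ y i) ∧ ∑ i, y i ≤ 1} :=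
          ⟨fun i => h1 i.1, by rw [hsum2']; exact h2⟩
        rw [Finf, indicator_of_mem hmem, hf1v, hf₂, indicator_of_mem hmem2, mul_one]
      · rw [Finf, indicator_of_notMem (fun h => h2 h.2), hf₂,
          indicator_of_notMem (fun h => h2 (by rw [← hsum2']; exact h.2)), mul_zero]
    · push_neg at h1
      obtain ⟨i₀, hi₀⟩ := h1
      rw [Finf, indicator_of_notMem (fun h => absurd (h.1 i₀) (not_le.2 hi₀))]
      by_cases hip : P i₀
      · have hz : f₁ (e v).1 = 0 := by
          rw [hf₁]
          exact Finset.prod_eq_zero (Finset.mem_univ (⟨i₀, hip⟩ : {i // P i}))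
            (indicator_of_notMem (by simpa using (not_le.2 hi₀ : ¬ (0 ≤ (e v).1 ⟨i₀, hip⟩))) _)
        rw [hz, zero_mul]
      · have hz : f₂ (e v).2 = 0 :=
          indicator_of_notMem (fun h => absurd (h.1 ⟨i₀, hip⟩) (not_le.2 hi₀)) _
        rw [hz, mul_zero]
  have hFeq : Finf κ = (fun z : ({i // P i} → ℝ) × ({i // ¬ P i} → ℝ) =>
      f₁ z.1 * f₂ z.2) ∘ e := funext fun v => hcomp v
  have hprodint : Integrable (fun z : ({i // P i} → ℝ) × ({i // ¬ P i} → ℝ) =>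
      f₁ z.1 * f₂ z.2) := by
    rw [Measure.volume_eq_prod]
    exact hint1.mul_prod hint2
  constructor
  · rw [hFeq]
    exact (hmp.integrable_comp_emb e.measurableEmbedding).2 hprodint
  · rw [hFeq]
    have := hmp.integral_comp' (fun z : ({i // P i} → ℝ) × ({i // ¬ P i} → ℝ) =>
      f₁ z.1 * f₂ z.2)
    rw [Function.comp_def, this, Measure.volume_eq_prod, integral_prod_mul, hval1, hval2]
    have hcard : Fintype.card {i // ¬ P i}
        = p - (Finset.univ.filter fun i => 0 < κ i).card := by
      have h1 := Finset.card_filter_add_card_filter_not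
        (s := (Finset.univ : Finset (Fin p))) (p := P)
      rw [Fintype.card_subtype]
      have h2 : (Finset.univ.filter fun i => 0 < κ i) = Finset.univ.filter P := rfl
      rw [h2]
      simp only [Finset.card_univ, Fintype.card_fin] at h1
      omega
    have hprod : ∏ i : {i // P i}, (κ i.1)⁻¹
        = ∏ i ∈ Finset.univ.filter fun i => 0 < κ i, (κ i)⁻¹ :=
      (Finset.prod_subtype (Finset.univ.filter P) (fun x => by simp) (fun i => (κ i)⁻¹)).symm
    rw [hcard, hprod]
    ring

lemma stepA (hκ : ∀ i, 0 ≤ κ i) {s : ℝ} (hs : 0 < s) :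
    s ^ (Finset.univ.filter fun i => 0 < κ i).card *
      ∫ u in {u : Fin p → ℝ | (∀ i, 0 ≤ u i) ∧ ∑ i, u i ≤ 1}, Real.exp (-(s * ∑ i, κ i * u i))
    = ∫ v, Set.indicator {v : Fin p → ℝ | (∀ i, 0 ≤ v i) ∧
        ∑ i, (if 0 < κ i then s⁻¹ else 1) * v i ≤ 1}
        (fun v => Real.exp (-∑ i, κ i * v i)) v := by
  have hκ0 : ∀ i, ¬ 0 < κ i → κ i = 0 := fun i hi => le_antisymm (not_lt.1 hi) (hκ i)
  set m := (Finset.univ.filter fun i => 0 < κ i).card with hm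
  set L := Matrix.toLin' (Matrix.diagonal (fun i => if 0 < κ i then s⁻¹ else 1)) with hL
  have hLv : ∀ v : Fin p → ℝ, L v = fun i => (if 0 < κ i then s⁻¹ else 1) * v i := by
    intro v; ext i
    rw [hL, Matrix.toLin'_apply, Matrix.mulVec_diagonal]
  have hdet : LinearMap.det L = (s⁻¹) ^ m := by
    rw [hL, LinearMap.det_toLin', Matrix.det_diagonal, Finset.prod_ite, Finset.prod_const,
      Finset.prod_const_one, mul_one, hm]
  have hdet0 : LinearMap.det L ≠ 0 := by
    rw [hdet]; positivity
  have hmap := Real.map_linearMap_volume_pi_eq_smul_volume_pi hdet0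
  set Δ := {u : Fin p → ℝ | (∀ i, 0 ≤ u i) ∧ ∑ i, u i ≤ 1} with hΔ
  set A := {v : Fin p → ℝ | (∀ i, 0 ≤ v i) ∧
      ∑ i, (if 0 < κ i then s⁻¹ else 1) * v i ≤ 1} with hA
  set g := Set.indicator Δ (fun u : Fin p → ℝ => Real.exp (-(s * ∑ i, κ i * u i))) with hgdef
  have hgsm : StronglyMeasurable g := by
    apply Continuous.stronglyMeasurable ?_ |>.indicator (simplex_meas' 1)
    fun_prop
  have hLmeas : Measurable L := L.continuous_of_finiteDimensional.measurable
  have hcalc : ∫ v, g (L v) = s ^ m * ∫ u, g u := by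
    rw [← integral_map hLmeas.aemeasurable hgsm.aestronglyMeasurable, hmap, hdet,
      integral_smul_measure]
    have : |((s⁻¹ : ℝ) ^ m)⁻¹| = s ^ m := by
      rw [← inv_pow, inv_inv, abs_of_pos (pow_pos hs m)]
    rw [this, ENNReal.toReal_ofReal (pow_pos hs m).le, smul_eq_mul]
  have hgL : ∀ v, g (L v) = Set.indicator A
      (fun v => Real.exp (-∑ i, κ i * v i)) v := by
    intro v
    have hsum : ∑ i, (L v) i = ∑ i, (if 0 < κ i then s⁻¹ else 1) * v i := by
      refine Finset.sum_congr rfl fun i _ => ?_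
      rw [hLv]
    have hiff : L v ∈ Δ ↔ v ∈ A := by
      rw [hΔ, hA]
      simp only [mem_setOf_eq, hsum]
      constructor
      · rintro ⟨h1, h2⟩
        refine ⟨fun i => ?_, h2⟩
        have := h1 i
        rw [hLv] at this
        by_cases hip : 0 < κ i
        · simp only [hip, if_true] at this
          exact nonneg_of_mul_nonneg_right this (inv_pos.2 hs)
        · simpa [hip] using this
      · rintro ⟨h1, h2⟩
        refine ⟨fun i => ?_, h2⟩
        rw [hLv]
        have : 0 < (if 0 < κ i then s⁻¹ else 1 : ℝ) := by
          split
          · exact inv_pos.2 hs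
          · exact one_pos
        exact mul_nonneg this.le (h1 i)
    by_cases hv : v ∈ A
    · rw [hgdef, indicator_of_mem (hiff.2 hv), indicator_of_mem hv]
      congr 1
      rw [neg_inj, Finset.mul_sum]
      refine Finset.sum_congr rfl fun i _ => ?_
      rw [hLv]
      by_cases hip : 0 < κ i
      · simp only [hip, if_true]
        field_simp
      · simp [hκ0 i hip]
    · rw [hgdef, indicator_of_notMem (fun h => hv (hiff.1 h)), indicator_of_notMem hv]
  calc s ^ m * ∫ u in Δ, Real.exp (-(s * ∑ i, κ i * u i))
      = s ^ m * ∫ u, g u := by rw [hgdef, integral_indicator (simplex_meas' 1)]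
    _ = ∫ v, g (L v) := hcalc.symm
    _ = _ := by simp_rw [hgL]

end Limit

/-- Laplace-type asymptotics on the simplex: for `κᵢ ≥ 0`, `S = {i : κᵢ > 0}`,
`m = #S` and `Δ_p = {u ∈ ℝ^p_{≥0} : Σuᵢ ≤ 1}`:
`lim_{s→∞} s^m ∫_{Δ_p} exp(−s·Σκᵢuᵢ) du = (Π_{i∈S} κᵢ⁻¹)/(p−m)!`. -/
theorem stmt10 (p : ℕ) (hp : 1 ≤ p) (κ : Fin p → ℝ) (hκ : ∀ i, 0 ≤ κ i) :
    Filter.Tendsto (fun s : ℝ =>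
        s ^ (Finset.univ.filter fun i => 0 < κ i).card *
          ∫ u in {u : Fin p → ℝ | (∀ i, 0 ≤ u i) ∧ ∑ i, u i ≤ 1},
            Real.exp (-(s * ∑ i, κ i * u i)))
      Filter.atTop
      (nhds ((∏ i ∈ Finset.univ.filter fun i => 0 < κ i, (κ i)⁻¹) /
        (Nat.factorial (p - (Finset.univ.filter fun i => 0 < κ i).card) : ℝ))) := by
  obtain ⟨hFint, hFval⟩ := limit_integral κ hκ
  set Fs : ℝ → (Fin p → ℝ) → ℝ := fun s => Set.indicator {v : Fin p → ℝ | (∀ i, 0 ≤ v i) ∧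
      ∑ i, (if 0 < κ i then s⁻¹ else 1) * v i ≤ 1}
      (fun v => Real.exp (-∑ i, κ i * v i)) with hFs
  -- a.e. convergence
  have hNnull : volume {v : Fin p → ℝ |
      ∑ i ∈ Finset.univ.filter (fun i => ¬ 0 < κ i), v i = 1} = 0 := by
    by_cases hne : (Finset.univ.filter (fun i : Fin p => ¬ 0 < κ i)).Nonempty
    · exact hyperplane_null _ hne
    · rw [Finset.not_nonempty_iff_eq_empty] at hne
      rw [hne]
      simp
  have hlim : ∀ᵐ v : Fin p → ℝ, Tendsto (fun s => Fs s v) atTop (𝓝 (Finf κ v)) := by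
    have hae : ∀ᵐ v : Fin p → ℝ, v ∉ {v : Fin p → ℝ |
        ∑ i ∈ Finset.univ.filter (fun i => ¬ 0 < κ i), v i = 1} :=
      measure_eq_zero_iff_ae_notMem.1 hNnull
    filter_upwards [hae] with v hvN
    by_cases h1 : ∀ i, 0 ≤ v i
    · have hvN' : ∑ i ∈ Finset.univ.filter (fun i => ¬ 0 < κ i), v i ≠ 1 := hvN
      rcases lt_or_gt_of_ne hvN' with hlt | hgt
      · -- eventually in the set, both sides equal exp
        have hdecomp : ∀ s : ℝ, ∑ i, (if 0 < κ i then s⁻¹ else 1) * v i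
            = s⁻¹ * (∑ i ∈ Finset.univ.filter (fun i => 0 < κ i), v i)
              + ∑ i ∈ Finset.univ.filter (fun i => ¬ 0 < κ i), v i := by
          intro s
          rw [← Finset.sum_filter_add_sum_filter_not Finset.univ (fun i => 0 < κ i)
            (fun i => (if 0 < κ i then s⁻¹ else 1) * v i)]
          congr 1
          · rw [Finset.mul_sum]
            refine Finset.sum_congr rfl fun i hi => ?_
            rw [if_pos (Finset.mem_filter.1 hi).2]
          · refine Finset.sum_congr rfl fun i hi => ?_
            rw [if_neg (Finset.mem_filter.1 hi).2, one_mul]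
        have htend : Tendsto (fun s : ℝ =>
            s⁻¹ * (∑ i ∈ Finset.univ.filter (fun i => 0 < κ i), v i)
              + ∑ i ∈ Finset.univ.filter (fun i => ¬ 0 < κ i), v i) atTop
            (𝓝 (0 * (∑ i ∈ Finset.univ.filter (fun i => 0 < κ i), v i)
              + ∑ i ∈ Finset.univ.filter (fun i => ¬ 0 < κ i), v i)) :=
          (tendsto_inv_atTop_zero.mul_const _).add_const _
        rw [zero_mul, zero_add] at htend
        have hev : ∀ᶠ s : ℝ in atTop, Fs s v = Finf κ v := by
          filter_upwards [htend.eventually_lt_const hlt] with s hs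
          have hvA : v ∈ {v : Fin p → ℝ | (∀ i, 0 ≤ v i) ∧
              ∑ i, (if 0 < κ i then s⁻¹ else 1) * v i ≤ 1} :=
            ⟨h1, by rw [hdecomp s]; exact hs.le⟩
          have hvΩ : v ∈ {v : Fin p → ℝ | (∀ i, 0 ≤ v i) ∧
              ∑ i ∈ Finset.univ.filter (fun i => ¬ 0 < κ i), v i ≤ 1} := ⟨h1, hlt.le⟩
          simp only [hFs, Finf]
          rw [indicator_of_mem hvA, indicator_of_mem hvΩ]
        exact Tendsto.congr' (by filter_upwards [hev] with s hs; exact hs.symm)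
          tendsto_const_nhds
      · -- eventually 0 = 0
        have hFinf0 : Finf κ v = 0 := by
          rw [Finf]
          exact indicator_of_notMem (fun h => absurd h.2 (not_le.2 hgt)) _
        have hev : ∀ᶠ s : ℝ in atTop, Fs s v = 0 := by
          filter_upwards [eventually_gt_atTop (0:ℝ)] with s hs
          simp only [hFs]
          apply indicator_of_notMem
          intro h
          apply absurd h.2
          push_neg
          calc (1:ℝ) < ∑ i ∈ Finset.univ.filter (fun i => ¬ 0 < κ i), v i := hgt
            _ = ∑ i ∈ Finset.univ.filter (fun i => ¬ 0 < κ i),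
                (if 0 < κ i then s⁻¹ else 1) * v i := by
                refine Finset.sum_congr rfl fun i hi => ?_
                rw [if_neg (Finset.mem_filter.1 hi).2, one_mul]
            _ ≤ ∑ i, (if 0 < κ i then s⁻¹ else 1) * v i := by
                apply Finset.sum_le_sum_of_subset_of_nonneg (Finset.filter_subset _ _)
                intro i _ _
                have hc : (0:ℝ) ≤ (if 0 < κ i then s⁻¹ else 1) := by
                  split
                  · exact (inv_pos.2 hs).le
                  · exact zero_le_one
                exact mul_nonneg hc (h1 i)
        rw [hFinf0]
        exact Tendsto.congr' (by filter_upwards [hev] with s hs; exact hs.symm)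
          tendsto_const_nhds
    · -- v has a negative coordinate: everything is 0
      have hFinf0 : Finf κ v = 0 := by
        rw [Finf]
        exact indicator_of_notMem (fun h => h1 h.1) _
      have hev : ∀ s : ℝ, Fs s v = 0 := fun s => by
        simp only [hFs]
        exact indicator_of_notMem (fun h => h1 h.1) _
      rw [hFinf0]
      simp_rw [hev]
      exact tendsto_const_nhds
  -- dominated convergence
  have hmeas : ∀ᶠ s : ℝ in atTop, AEStronglyMeasurable (Fs s) volume := by
    refine Eventually.of_forall fun s => ?_
    apply StronglyMeasurable.aestronglyMeasurable
    apply Continuous.stronglyMeasurable ?_ |>.indicator (wsimplex_meas _ 1)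
    fun_prop
  have hbound : ∀ᶠ s : ℝ in atTop, ∀ᵐ v : Fin p → ℝ, ‖Fs s v‖ ≤ Finf κ v := by
    filter_upwards [eventually_gt_atTop (0:ℝ)] with s hs
    refine Eventually.of_forall fun v => ?_
    by_cases hv : v ∈ {v : Fin p → ℝ | (∀ i, 0 ≤ v i) ∧
        ∑ i, (if 0 < κ i then s⁻¹ else 1) * v i ≤ 1}
    · have h1 := hv.1
      have hvΩ : v ∈ {v : Fin p → ℝ | (∀ i, 0 ≤ v i) ∧
          ∑ i ∈ Finset.univ.filter (fun i => ¬ 0 < κ i), v i ≤ 1} := by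
        refine ⟨h1, ?_⟩
        calc ∑ i ∈ Finset.univ.filter (fun i => ¬ 0 < κ i), v i
            = ∑ i ∈ Finset.univ.filter (fun i => ¬ 0 < κ i),
              (if 0 < κ i then s⁻¹ else 1) * v i := by
              refine Finset.sum_congr rfl fun i hi => ?_
              rw [if_neg (Finset.mem_filter.1 hi).2, one_mul]
          _ ≤ ∑ i, (if 0 < κ i then s⁻¹ else 1) * v i := by
              apply Finset.sum_le_sum_of_subset_of_nonneg (Finset.filter_subset _ _)
              intro i _ _
              have hc : (0:ℝ) ≤ (if 0 < κ i then s⁻¹ else 1) := by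
                split
                · exact (inv_pos.2 hs).le
                · exact zero_le_one
              exact mul_nonneg hc (h1 i)
          _ ≤ 1 := hv.2
      simp only [hFs, Finf]
      rw [indicator_of_mem hv, indicator_of_mem hvΩ, Real.norm_eq_abs,
        abs_of_pos (Real.exp_pos _)]
    · simp only [hFs]
      rw [indicator_of_notMem hv, norm_zero]
      exact indicator_nonneg (fun v _ => (Real.exp_pos _).le) v
  have hDCT : Tendsto (fun s => ∫ v, Fs s v) atTop (𝓝 (∫ v, Finf κ v)) :=
    tendsto_integral_filter_of_dominated_convergence (Finf κ) hmeas hbound hFint hlim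
  rw [hFval] at hDCT
  refine hDCT.congr' ?_
  filter_upwards [eventually_gt_atTop (0:ℝ)] with s hs
  exact (stepA κ hκ hs).symm
end

section
/- Let p ≥ 0 and q ≥ 0 be integers, let b₀, …, b_p be positive integers, and set b' = Σᵢ₌₀^p bᵢ. Define Φ : ℝ^{p+1} × ℝ^q → ℝ^{p+1} × ℝ^q by Φ(x₀, x₁, …, x_p, y₁, …, y_q) = (x₀, x₁+x₀, …, x_p+x₀, y₁+x₀, …, y_q+x₀). Then Φ restricts to a homeomorphism from the set {(x,y) : all coordinates ≥ 0 and b'·x₀ + Σᵢ₌₁^p bᵢxᵢ = 1} onto the set {(ξ,η) : all coordinates ≥ 0, Σᵢ₌₀^p bᵢξᵢ = 1, ξ₀ ≤ ξᵢ for all 1 ≤ i ≤ p, and ξ₀ ≤ ηⱼ for all 1 ≤ j ≤ q}. -/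
private lemma sumsplit (p : ℕ) (b : Fin (p + 1) → ℕ) (f : Fin (p+1) → ℝ) :
    ∑ i, (b i : ℝ) * f i = (b 0 : ℝ) * f 0 + ∑ i : Fin p, (b i.succ : ℝ) * f i.succ :=
  Fin.sum_univ_succ _

/-- Subdivision under blowup: with `b' = Σᵢ₌₀^p bᵢ`, the map
`Φ(x₀,…,x_p,y) = (x₀, x₁+x₀, …, x_p+x₀, y₁+x₀, …, y_q+x₀)` restricts to a
homeomorphism from `{(x,y) ≥ 0 : b'x₀ + Σᵢ₌₁^p bᵢxᵢ = 1}` onto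
`{(ξ,η) ≥ 0 : Σᵢ₌₀^p bᵢξᵢ = 1, ξ₀ ≤ ξᵢ (1 ≤ i ≤ p), ξ₀ ≤ ηⱼ}`. -/
theorem stmt12 (p q : ℕ) (b : Fin (p + 1) → ℕ) (hb : ∀ i, 0 < b i) :
    ∃ h : {z : (Fin (p + 1) → ℝ) × (Fin q → ℝ) //
            (∀ i, 0 ≤ z.1 i) ∧ (∀ j, 0 ≤ z.2 j) ∧
              (∑ i, (b i : ℝ)) * z.1 0 + ∑ i : Fin p, (b i.succ : ℝ) * z.1 i.succ = 1} ≃ₜ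
          {w : (Fin (p + 1) → ℝ) × (Fin q → ℝ) //
            (∀ i, 0 ≤ w.1 i) ∧ (∀ j, 0 ≤ w.2 j) ∧ (∑ i, (b i : ℝ) * w.1 i = 1) ∧
              (∀ i : Fin p, w.1 0 ≤ w.1 i.succ) ∧ ∀ j, w.1 0 ≤ w.2 j},
      ∀ z, ((h z).val.1 0 = z.val.1 0) ∧
           (∀ i : Fin p, (h z).val.1 i.succ = z.val.1 i.succ + z.val.1 0) ∧
           ∀ j, (h z).val.2 j = z.val.2 j + z.val.1 0 := by
  classical
  have hbsum : (∑ i, (b i : ℝ)) = (b 0 : ℝ) + ∑ i : Fin p, (b i.succ : ℝ) :=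
    Fin.sum_univ_succ _
  refine ⟨{
    toFun := fun z => ⟨(fun i => z.val.1 i + (if i = 0 then 0 else z.val.1 0),
                        fun j => z.val.2 j + z.val.1 0), ?_, ?_, ?_, ?_, ?_⟩
    invFun := fun w => ⟨(fun i => w.val.1 i - (if i = 0 then 0 else w.val.1 0),
                        fun j => w.val.2 j - w.val.1 0), ?_, ?_, ?_⟩
    left_inv := ?_
    right_inv := ?_
    continuous_toFun := ?_
    continuous_invFun := ?_ }, ?_⟩
  · intro i
    obtain ⟨h1, h2, h3⟩ := z.2
    have := h1 i; have := h1 0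
    dsimp only
    split <;> linarith
  · intro j
    obtain ⟨h1, h2, h3⟩ := z.2
    have := h2 j; have := h1 0
    dsimp only; linarith
  · obtain ⟨h1, h2, h3⟩ := z.2
    dsimp only
    rw [sumsplit]
    simp only [Fin.succ_ne_zero, if_neg, ite_true, ite_false, if_pos, add_zero]
    have key : ∑ i : Fin p, (b i.succ : ℝ) * (z.val.1 i.succ + z.val.1 0)
        = (∑ i : Fin p, (b i.succ : ℝ) * z.val.1 i.succ)
          + (∑ i : Fin p, (b i.succ : ℝ)) * z.val.1 0 := by
      rw [Finset.sum_mul, ← Finset.sum_add_distrib]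
      exact Finset.sum_congr rfl (fun i _ => by ring)
    linear_combination h3 + key - z.val.1 0 * hbsum
  · intro i
    obtain ⟨h1, h2, h3⟩ := z.2
    have := h1 i.succ
    dsimp only
    simp only [Fin.succ_ne_zero, ite_true, ite_false, add_zero]
    linarith
  · intro j
    obtain ⟨h1, h2, h3⟩ := z.2
    have := h2 j
    dsimp only
    simp only [ite_true, add_zero]
    linarith
  · intro i
    obtain ⟨h1, h2, h3, h4, h5⟩ := w.2
    have := h1 i
    dsimp only
    split
    · linarith
    · next h =>
      obtain ⟨i, rfl⟩ := Fin.eq_succ_of_ne_zero h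
      have := h4 i; linarith
  · intro j
    obtain ⟨h1, h2, h3, h4, h5⟩ := w.2
    have := h5 j; dsimp only; linarith
  · obtain ⟨h1, h2, h3, h4, h5⟩ := w.2
    rw [sumsplit] at h3
    dsimp only
    simp only [Fin.succ_ne_zero, ite_true, ite_false, sub_zero]
    have key : ∑ i : Fin p, (b i.succ : ℝ) * (w.val.1 i.succ - w.val.1 0)
        = (∑ i : Fin p, (b i.succ : ℝ) * w.val.1 i.succ)
          - (∑ i : Fin p, (b i.succ : ℝ)) * w.val.1 0 := by
      rw [Finset.sum_mul, ← Finset.sum_sub_distrib]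
      exact Finset.sum_congr rfl (fun i _ => by ring)
    linear_combination h3 + key + w.val.1 0 * hbsum
  · intro z
    apply Subtype.ext
    apply Prod.ext
    · funext i
      dsimp only
      by_cases h : i = 0 <;> simp [h]
    · funext j
      dsimp only
      simp
  · intro w
    apply Subtype.ext
    apply Prod.ext
    · funext i
      dsimp only
      by_cases h : i = 0 <;> simp [h]
    · funext j
      dsimp only
      simp
  · apply Continuous.subtype_mk
    apply Continuous.prodMk
    · exact continuous_pi fun i => by by_cases h : i = 0 <;> simp only [h, ite_true, ite_false] <;> fun_prop
    · fun_prop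
  · apply Continuous.subtype_mk
    apply Continuous.prodMk
    · exact continuous_pi fun i => by by_cases h : i = 0 <;> simp only [h, ite_true, ite_false] <;> fun_prop
    · fun_prop
  · intro z
    refine ⟨by simp, fun i => by simp [Fin.succ_ne_zero], fun j => rfl⟩
end
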